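/- arXiv:2308.13255 — 2 statements merged into one kernel-verified Lean document; each statement's English description precedes it below -/
import Mathlib

section
/- Let r ≥ 2, k ≥ 2, 1 ≤ ℓ ≤ k-1 and let m be an integer with 1 ≤ m < k/(k-ℓ). Then R̂_r(P_{ℓ+(m+1)(k-ℓ)}^{(k,ℓ)}) ≤ R̂_r(P_{2m(k-ℓ)}^{(m(k-ℓ), (m-1)(k-ℓ))}) ≤ R̂_r(P_{2m}^{(m)}) ≤ (e·(m+1)·r)^m, where e is Euler's number. -/
open Finset

/-- A `k`-uniform hypergraph, given by its (finite) edge set; vertices are natural numbers. -/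
def IsUniform (k : ℕ) (G : Finset (Finset ℕ)) : Prop :=
  ∀ e ∈ G, e.card = k

/-- The vertex set of a hypergraph. -/
def hVerts (G : Finset (Finset ℕ)) : Finset ℕ := G.biUnion id

/-- `G` contains a copy of `H`, i.e. a subgraph isomorphic to `H`. -/
def IsCopy (H G : Finset (Finset ℕ)) : Prop :=
  ∃ f : ℕ → ℕ, Set.InjOn f ↑(hVerts H) ∧ ∀ e ∈ H, e.image f ∈ G

/-- `G →_r H`: every `r`-coloring of the edges of `G` yields a monochromatic copy of `H`. -/
def Arrows (r : ℕ) (G H : Finset (Finset ℕ)) : Prop :=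
  ∀ χ : Finset ℕ → Fin r, ∃ c : Fin r, IsCopy H (G.filter fun e => χ e = c)

/-- The `r`-color size-Ramsey number of `H`: the minimum number of edges of a
`k`-uniform hypergraph `G` with `G →_r H`. -/
noncomputable def sizeRamsey (k r : ℕ) (H : Finset (Finset ℕ)) : ℕ :=
  sInf {m | ∃ G : Finset (Finset ℕ), IsUniform k G ∧ Arrows r G H ∧ G.card = m}

/-- The `r`-color Ramsey number of `H`: the minimum number of vertices of a
`k`-uniform hypergraph `G` with `G →_r H`. -/
noncomputable def vertexRamsey (k r : ℕ) (H : Finset (Finset ℕ)) : ℕ :=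
  sInf {m | ∃ G : Finset (Finset ℕ), IsUniform k G ∧ Arrows r G H ∧ (hVerts G).card = m}

/-- The `(k,ℓ)`-path with `m` edges: edge `i` (for `0 ≤ i < m`) is
`{i(k-ℓ), i(k-ℓ)+1, …, i(k-ℓ)+k-1}`. -/
def pathWithEdges (k l m : ℕ) : Finset (Finset ℕ) :=
  (Finset.range m).image fun i => (Finset.range k).image fun j => i * (k - l) + j

/-- The `(k,ℓ)`-path on `n` vertices, `P_n^{(k,ℓ)}`; it has `(n-ℓ)/(k-ℓ)` edges. -/
def hPath (k l n : ℕ) : Finset (Finset ℕ) :=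
  pathWithEdges k l ((n - l) / (k - l))


-- interval path: K-uniform, step D, M edges
def pathE (K D M : ℕ) : Finset (Finset ℕ) :=
  (Finset.range M).image fun i => Finset.Ico (i * D) (i * D + K)

lemma image_add_range (a k : ℕ) :
    (Finset.range k).image (fun j => a + j) = Finset.Ico a (a + k) := by
  ext x; simp only [mem_image, mem_range, mem_Ico]
  constructor
  · rintro ⟨j, hj, rfl⟩; omega
  · intro h; exact ⟨x - a, by omega, by omega⟩

lemma pathWithEdges_eq (k l M : ℕ) : pathWithEdges k l M = pathE k (k - l) M := by
  unfold pathWithEdges pathE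
  refine Finset.image_congr ?_
  intro i _
  exact image_add_range _ _

lemma mem_pathE {K D M : ℕ} {e : Finset ℕ} :
    e ∈ pathE K D M ↔ ∃ i < M, e = Finset.Ico (i * D) (i * D + K) := by
  simp only [pathE, mem_image, mem_range]
  constructor
  · rintro ⟨i, hi, rfl⟩; exact ⟨i, hi, rfl⟩
  · rintro ⟨i, hi, rfl⟩; exact ⟨i, hi, rfl⟩

lemma mem_hVerts {G : Finset (Finset ℕ)} {x : ℕ} :
    x ∈ hVerts G ↔ ∃ e ∈ G, x ∈ e := by simp [hVerts]

lemma hVerts_mono {G G' : Finset (Finset ℕ)} (h : G ⊆ G') : hVerts G ⊆ hVerts G' :=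
  Finset.biUnion_subset_biUnion_of_subset_left _ h

lemma hVerts_pathE {K D M : ℕ} (hD : 0 < D) (hDK : D ≤ K) :
    hVerts (pathE K D (M + 1)) = Finset.range (M * D + K) := by
  ext x
  simp only [mem_hVerts, mem_pathE, mem_range]
  constructor
  · rintro ⟨e, ⟨i, hi, rfl⟩, hx⟩
    have hx' := Finset.mem_Ico.1 hx
    have : i * D ≤ M * D := Nat.mul_le_mul_right _ (by omega)
    omega
  · intro hx
    have h1 : x / D * D ≤ x := Nat.div_mul_le_self x D
    have h2 := Nat.div_add_mod x D
    rw [Nat.mul_comm] at h2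
    have h3 : x % D < D := Nat.mod_lt _ hD
    rcases le_or_gt (x / D) M with h | h
    · exact ⟨_, ⟨x / D, by omega, rfl⟩, Finset.mem_Ico.2 (by omega)⟩
    · have h4 : (M + 1) * D ≤ x / D * D := Nat.mul_le_mul_right _ (by omega)
      rw [Nat.add_mul, one_mul] at h4
      exact ⟨_, ⟨M, by omega, rfl⟩, Finset.mem_Ico.2 (by omega)⟩

lemma divmod_unique {a b u v d : ℕ} (hu : u < d) (hv : v < d)
    (h : a * d + u = b * d + v) : a = b ∧ u = v := by
  have h1 : (a * d + u) / d = a := by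
    rw [Nat.add_comm, Nat.add_mul_div_right _ _ (by omega : 0 < d), Nat.div_eq_of_lt hu,
      Nat.zero_add]
  have h2 : (b * d + v) / d = b := by
    rw [Nat.add_comm, Nat.add_mul_div_right _ _ (by omega : 0 < d), Nat.div_eq_of_lt hv,
      Nat.zero_add]
  have hab : a = b := by rw [← h1, ← h2, h]
  subst hab
  exact ⟨rfl, by omega⟩

/-- Blow-up: from a host for the tight path `pathE m 1 (m+1)` to a host for
`pathE (m*d) d (m+1)`. -/
lemma blowup {m d r : ℕ} (hd : 0 < d) (hm : 0 < m) (G : Finset (Finset ℕ))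
    (hu : IsUniform m G) (ha : Arrows r G (pathE m 1 (m + 1))) :
    ∃ G2 : Finset (Finset ℕ), IsUniform (m * d) G2 ∧ Arrows r G2 (pathE (m * d) d (m + 1)) ∧
      G2.card ≤ G.card := by
  classical
  set β : Finset ℕ → Finset ℕ := fun e => e.biUnion fun v => Finset.Ico (v * d) (v * d + d)
    with hβ
  have hdisj : ∀ (e : Finset ℕ), ∀ v ∈ e, ∀ w ∈ e, v ≠ w →
      Disjoint (Finset.Ico (v * d) (v * d + d)) (Finset.Ico (w * d) (w * d + d)) := by
    intro e v _ w _ hvw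
    rw [Finset.disjoint_left]
    intro x hx hx'
    rw [Finset.mem_Ico] at hx hx'
    rcases Nat.lt_or_ge v w with h | h
    · have : (v + 1) * d ≤ w * d := Nat.mul_le_mul_right _ (by omega)
      rw [Nat.add_mul, one_mul] at this; omega
    · have hwv : w < v := by omega
      have : (w + 1) * d ≤ v * d := Nat.mul_le_mul_right _ (by omega)
      rw [Nat.add_mul, one_mul] at this; omega
  have hβcard : ∀ e ∈ G, (β e).card = m * d := by
    intro e he
    rw [hβ, Finset.card_biUnion (hdisj e)]
    rw [Finset.sum_congr rfl (fun v _ => Nat.card_Ico _ _)]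
    simp only [Nat.add_sub_cancel_left]
    rw [Finset.sum_const, smul_eq_mul, hu e he]
  refine ⟨G.image β, ?_, ?_, Finset.card_image_le⟩
  · intro e he
    obtain ⟨e', he', rfl⟩ := Finset.mem_image.1 he
    exact hβcard e' he'
  · intro χ
    obtain ⟨c, f, hinj, hcopy⟩ := ha fun e => χ (β e)
    refine ⟨c, fun p => f (p / d) * d + p % d, ?_, ?_⟩
    · -- injectivity
      rw [hVerts_pathE hd (Nat.le_mul_of_pos_left d hm)]
      intro p hp q hq hpq
      simp only [Finset.coe_range, Set.mem_Iio] at hp hq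
      obtain ⟨h1, h2⟩ := divmod_unique (Nat.mod_lt _ hd) (Nat.mod_lt _ hd) hpq
      have hdom : ∀ x : ℕ, x < m * d + m * d → (x / d : ℕ) ∈ (↑(hVerts (pathE m 1 (m + 1))) : Set ℕ) := by
        intro x hx
        rw [hVerts_pathE Nat.one_pos hm, Finset.coe_range, Set.mem_Iio, Nat.mul_one]
        rw [Nat.div_lt_iff_lt_mul hd]
        calc x < m * d + m * d := hx
        _ = (m + m) * d := by ring
      have h3 : p / d = q / d := hinj (hdom p hp) (hdom q hq) h1
      conv_lhs => rw [← Nat.div_add_mod p d]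
      conv_rhs => rw [← Nat.div_add_mod q d]
      rw [h3, h2]
    · -- edges
      intro e he
      rw [mem_pathE] at he
      obtain ⟨i, hi, rfl⟩ := he
      have hedge : (Finset.Ico i (i + m)).image f ∈ G.filter fun e => χ (β e) = c := by
        apply hcopy
        rw [mem_pathE]
        exact ⟨i, hi, by rw [Nat.mul_one]⟩
      rw [Finset.mem_filter] at hedge
      have himg : (Finset.Ico (i * d) (i * d + m * d)).image (fun p => f (p / d) * d + p % d)
          = β ((Finset.Ico i (i + m)).image f) := by
        ext x
        simp only [Finset.mem_image, Finset.mem_Ico, hβ, Finset.mem_biUnion]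
        constructor
        · rintro ⟨p, hp, rfl⟩
          have hq1 : i ≤ p / d := by rw [Nat.le_div_iff_mul_le hd]; omega
          have hq2 : p / d < i + m := by
            rw [Nat.div_lt_iff_lt_mul hd]
            calc p < i * d + m * d := hp.2
            _ = (i + m) * d := by ring
          have hm1 := Nat.mod_lt p hd
          exact ⟨f (p / d), ⟨p / d, ⟨hq1, hq2⟩, rfl⟩,
            ⟨Nat.le_add_right _ _, by omega⟩⟩
        · rintro ⟨y, ⟨v, hv, rfl⟩, hx⟩
          refine ⟨v * d + (x - f v * d), ⟨?_, ?_⟩, ?_⟩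
          · have : i * d ≤ v * d := Nat.mul_le_mul_right _ hv.1
            omega
          · have : (v + 1) * d ≤ (i + m) * d := Nat.mul_le_mul_right _ (by omega)
            rw [Nat.add_mul, one_mul, Nat.add_mul] at this
            omega
          · have hlt : x - f v * d < d := by omega
            have hdiv : (v * d + (x - f v * d)) / d = v := by
              rw [Nat.add_comm, Nat.add_mul_div_right _ _ hd, Nat.div_eq_of_lt hlt, Nat.zero_add]
            have hmod : (v * d + (x - f v * d)) % d = x - f v * d := by
              rw [Nat.add_comm, Nat.add_mul_mod_self_right, Nat.mod_eq_of_lt hlt]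
            rw [hdiv, hmod]; omega
      rw [himg, Finset.mem_filter]
      refine ⟨Finset.mem_image.2 ⟨_, hedge.1, rfl⟩, hedge.2⟩

/-- Adding `s` universal vertices: from a host for `pathE (m*d) d (m+1)` to a host for
`pathE (m*d+s) d (m+1)`. -/
lemma addUniv {m d s r : ℕ} (hd : 0 < d) (hm : 0 < m) (G2 : Finset (Finset ℕ))
    (hu : IsUniform (m * d) G2) (ha : Arrows r G2 (pathE (m * d) d (m + 1))) :
    ∃ G1 : Finset (Finset ℕ), IsUniform (m * d + s) G1 ∧
      Arrows r G1 (pathE (m * d + s) d (m + 1)) ∧ G1.card ≤ G2.card := by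
  classical
  set S0 : ℕ := (hVerts G2).sup id with hS0
  set T : Finset ℕ := Finset.Ico (S0 + 1) (S0 + 1 + s) with hT
  have hvle : ∀ x ∈ hVerts G2, x ≤ S0 := fun x hx => Finset.le_sup (f := id) hx
  have hdisjT : ∀ e ∈ G2, Disjoint e T := by
    intro e he
    rw [Finset.disjoint_left]
    intro x hx hxT
    have : x ≤ S0 := hvle x (mem_hVerts.2 ⟨e, he, hx⟩)
    rw [hT, Finset.mem_Ico] at hxT; omega
  refine ⟨G2.image (fun e => e ∪ T), ?_, ?_, Finset.card_image_le⟩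
  · intro e he
    obtain ⟨e', he', rfl⟩ := Finset.mem_image.1 he
    rw [Finset.card_union_of_disjoint (hdisjT e' he'), hu e' he', Nat.card_Ico]
    omega
  · intro χ
    obtain ⟨c, f, hinj, hcopy⟩ := ha fun e => χ (e ∪ T)
    have hfv : ∀ p, p < m * d + m * d → f p ≤ S0 := by
      intro p hp
      have hp' : p ∈ hVerts (pathE (m * d) d (m + 1)) := by
        rw [hVerts_pathE hd (Nat.le_mul_of_pos_left d hm), Finset.mem_range]; omega
      obtain ⟨e, he, hpe⟩ := mem_hVerts.1 hp'
      have := hcopy e he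
      rw [Finset.mem_filter] at this
      exact hvle _ (mem_hVerts.2 ⟨_, this.1, Finset.mem_image_of_mem f hpe⟩)
    have hinj' : ∀ p q, p < m * d + m * d → q < m * d + m * d → f p = f q → p = q := by
      intro p q hp hq h
      have h1 : (p : ℕ) ∈ (↑(hVerts (pathE (m * d) d (m + 1))) : Set ℕ) := by
        rw [hVerts_pathE hd (Nat.le_mul_of_pos_left d hm)]; simp; omega
      have h2 : (q : ℕ) ∈ (↑(hVerts (pathE (m * d) d (m + 1))) : Set ℕ) := by
        rw [hVerts_pathE hd (Nat.le_mul_of_pos_left d hm)]; simp; omega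
      exact hinj h1 h2 h
    set F : ℕ → ℕ := fun p =>
      if p < m * d then f p else if p < m * d + s then S0 + 1 + (p - m * d) else f (p - s)
      with hF
    refine ⟨c, F, ?_, ?_⟩
    · -- injectivity of F on range (m*d + (m*d+s))
      rw [hVerts_pathE hd ((Nat.le_mul_of_pos_left d hm).trans (Nat.le_add_right _ _))]
      intro p hp q hq hpq
      simp only [Finset.coe_range, Set.mem_Iio] at hp hq
      rw [hF] at hpq
      simp only at hpq
      by_cases h1 : p < m * d <;> by_cases h2 : q < m * d <;>
        simp only [h1, h2, if_pos, if_neg, if_true, if_false] at hpq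
      · exact hinj' p q (by omega) (by omega) hpq
      · by_cases h3 : q < m * d + s <;> simp only [h3, if_true, if_false] at hpq
        · have := hfv p (by omega); omega
        · have := hinj' p (q - s) (by omega) (by omega) hpq; omega
      · by_cases h3 : p < m * d + s <;> simp only [h3, if_true, if_false] at hpq
        · have := hfv q (by omega); omega
        · have := hinj' (p - s) q (by omega) (by omega) hpq; omega
      · by_cases h3 : p < m * d + s <;> by_cases h4 : q < m * d + s <;>
          simp only [h3, h4, if_true, if_false] at hpq
        · omega
        · have := hfv (q - s) (by omega); omega
        · have := hfv (p - s) (by omega); omega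
        · have := hinj' (p - s) (q - s) (by omega) (by omega) hpq; omega
    · -- edges
      intro e he
      rw [mem_pathE] at he
      obtain ⟨i, hi, rfl⟩ := he
      have hid : i * d ≤ m * d := Nat.mul_le_mul_right _ (by omega)
      have hsplit : Finset.Ico (i * d) (i * d + (m * d + s)) =
          (Finset.Ico (i * d) (m * d) ∪ Finset.Ico (m * d) (m * d + s)) ∪
            Finset.Ico (m * d + s) (i * d + m * d + s) := by
        rw [Finset.Ico_union_Ico_eq_Ico hid (by omega),
          Finset.Ico_union_Ico_eq_Ico (by omega) (by omega)]
        congr 1; omega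
      rw [hsplit, Finset.image_union, Finset.image_union]
      have hp1 : (Finset.Ico (i * d) (m * d)).image F = (Finset.Ico (i * d) (m * d)).image f := by
        apply Finset.image_congr
        intro p hp
        simp only [Finset.coe_Ico, Set.mem_Ico] at hp
        rw [hF]; simp only [if_pos hp.2]
      have hp2 : (Finset.Ico (m * d) (m * d + s)).image F = T := by
        ext x
        simp only [Finset.mem_image, Finset.mem_Ico, hT, hF]
        constructor
        · rintro ⟨p, hp, rfl⟩
          simp only [if_neg (by omega : ¬ p < m * d), if_pos (by omega : p < m * d + s)]
          omega
        · intro hx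
          refine ⟨m * d + (x - (S0 + 1)), by omega, ?_⟩
          simp only [if_neg (by omega : ¬ m * d + (x - (S0 + 1)) < m * d),
            if_pos (by omega : m * d + (x - (S0 + 1)) < m * d + s)]
          omega
      have hp3 : (Finset.Ico (m * d + s) (i * d + m * d + s)).image F =
          (Finset.Ico (m * d) (i * d + m * d)).image f := by
        ext x
        simp only [Finset.mem_image, Finset.mem_Ico, hF]
        constructor
        · rintro ⟨p, hp, rfl⟩
          simp only [if_neg (by omega : ¬ p < m * d), if_neg (by omega : ¬ p < m * d + s)]
          exact ⟨p - s, by omega, rfl⟩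
        · rintro ⟨p, hp, rfl⟩
          refine ⟨p + s, by omega, ?_⟩
          simp only [if_neg (by omega : ¬ p + s < m * d), if_neg (by omega : ¬ p + s < m * d + s)]
          congr 1; omega
      rw [hp1, hp2, hp3]
      have hcomb : (Finset.Ico (i * d) (m * d)).image f ∪ T ∪
          (Finset.Ico (m * d) (i * d + m * d)).image f =
          (Finset.Ico (i * d) (i * d + m * d)).image f ∪ T := by
        rw [Finset.union_right_comm, ← Finset.image_union,
          Finset.Ico_union_Ico_eq_Ico hid (by omega)]
      rw [hcomb]
      have hedge : (Finset.Ico (i * d) (i * d + m * d)).image f ∈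
          G2.filter fun e => χ (e ∪ T) = c := by
        apply hcopy
        rw [mem_pathE]
        exact ⟨i, hi, rfl⟩
      rw [Finset.mem_filter] at hedge
      rw [Finset.mem_filter]
      exact ⟨Finset.mem_image.2 ⟨_, hedge.1, rfl⟩, hedge.2⟩

/-- Greedy construction of a tight path with `m+1` edges. -/
lemma build_path {m : ℕ} (hm : 0 < m) (H : Finset (Finset ℕ)) (hu : IsUniform m H)
    (hne : H.Nonempty)
    (hbig : ∀ σ : Finset ℕ, σ.card = m - 1 → (∃ e ∈ H, σ ⊆ e) →
      m + 1 ≤ (H.filter fun e => σ ⊆ e).card) :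
    IsCopy (pathE m 1 (m + 1)) H := by
  classical
  have key : ∀ t, t ≤ m → ∃ f : ℕ → ℕ,
      (∀ p q, p < m + t → q < m + t → f p = f q → p = q) ∧
      ∀ i ≤ t, (Finset.Ico i (i + m)).image f ∈ H := by
    intro t
    induction t with
    | zero =>
      intro _
      obtain ⟨e0, he0⟩ := hne
      have hc : e0.card = m := hu e0 he0
      set g := e0.orderIsoOfFin hc with hg
      refine ⟨fun i => if h : i < m then (g ⟨i, h⟩ : ℕ) else 0, ?_, ?_⟩
      · intro p q hp hq hpq
        simp only [Nat.add_zero] at hp hq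
        simp only [dif_pos hp, dif_pos hq] at hpq
        have := g.injective (Subtype.ext hpq)
        exact congrArg Fin.val this
      · intro i hi
        interval_cases i
        have hico : Finset.Ico 0 (0 + m) = Finset.range m := by
          rw [Nat.zero_add, Finset.range_eq_Ico]
        rw [hico]
        have himg : (Finset.range m).image (fun i => if h : i < m then (g ⟨i, h⟩ : ℕ) else 0)
            = e0 := by
          ext x
          simp only [Finset.mem_image, Finset.mem_range]
          constructor
          · rintro ⟨j, hj, rfl⟩
            rw [dif_pos hj]
            exact (g ⟨j, hj⟩).2
          · intro hx
            refine ⟨(g.symm ⟨x, hx⟩ : Fin m), (g.symm ⟨x, hx⟩).2, ?_⟩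
            rw [dif_pos (g.symm ⟨x, hx⟩).2]
            have h2 : g (g.symm ⟨x, hx⟩) = ⟨x, hx⟩ := g.apply_symm_apply _
            rw [Fin.eta, h2]
        rw [himg]; exact he0
    | succ t ih =>
      intro ht
      obtain ⟨f, hinj, hwin⟩ := ih (by omega)
      set σ : Finset ℕ := (Finset.Ico (t + 1) (t + m)).image f with hσ
      have hσcard : σ.card = m - 1 := by
        rw [hσ, Finset.card_image_of_injOn, Nat.card_Ico]
        · omega
        · intro p hp q hq h
          simp only [Finset.coe_Ico, Set.mem_Ico] at hp hq
          exact hinj p q (by omega) (by omega) h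
      have hwt : (Finset.Ico t (t + m)).image f ∈ H := hwin t le_rfl
      have hσsub : σ ⊆ (Finset.Ico t (t + m)).image f :=
        Finset.image_subset_image (Finset.Ico_subset_Ico (by omega) le_rfl)
      have hcod := hbig σ hσcard ⟨_, hwt, hσsub⟩
      set E := H.filter (fun e => σ ⊆ e) with hE
      have hsing : ∀ e ∈ E, ∃ x, e \ σ = {x} := by
        intro e he
        rw [hE, Finset.mem_filter] at he
        rw [← Finset.card_eq_one, Finset.card_sdiff_of_subset he.2, hu e he.1, hσcard]
        omega
      set g : Finset ℕ → ℕ := fun e => (e \ σ).sum id with hgdef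
      have hge : ∀ e ∈ E, e = σ ∪ {g e} ∧ g e ∉ σ := by
        intro e he
        obtain ⟨x, hx⟩ := hsing e he
        have hgx : g e = x := by rw [hgdef]; simp [hx]
        rw [hE, Finset.mem_filter] at he
        constructor
        · rw [hgx, ← hx, Finset.union_sdiff_of_subset he.2]
        · rw [hgx]
          have : x ∈ e \ σ := by rw [hx]; exact Finset.mem_singleton_self x
          exact (Finset.mem_sdiff.1 this).2
      set X := E.image g with hX
      have hXcard : m + 1 ≤ X.card := by
        rw [hX, Finset.card_image_of_injOn]
        · exact hcod
        · intro e he e' he' h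
          rw [(hge e he).1, (hge e' he').1, h]
      set Used := (Finset.range (m + t)).image f with hU
      have hσUsed : σ ⊆ Used := by
        rw [hσ, hU]
        apply Finset.image_subset_image
        intro p hp
        rw [Finset.mem_Ico] at hp
        rw [Finset.mem_range]
        omega
      have hXUsed : (X ∩ Used).card ≤ t + 1 := by
        have hsub : X ∩ Used ⊆ Used \ σ := by
          intro x hx
          rw [Finset.mem_inter] at hx
          obtain ⟨e, he, rfl⟩ := Finset.mem_image.1 hx.1
          exact Finset.mem_sdiff.2 ⟨hx.2, (hge e he).2⟩
        calc (X ∩ Used).card ≤ (Used \ σ).card := Finset.card_le_card hsub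
        _ = Used.card - σ.card := Finset.card_sdiff_of_subset hσUsed
        _ ≤ (m + t) - (m - 1) := by
            have : Used.card ≤ m + t := le_trans Finset.card_image_le (by rw [Finset.card_range])
            omega
        _ ≤ t + 1 := by omega
      have hex : ∃ x ∈ X, x ∉ Used := by
        by_contra hcon
        push_neg at hcon
        have : X ⊆ X ∩ Used := fun x hx => Finset.mem_inter.2 ⟨hx, hcon x hx⟩
        have := Finset.card_le_card this
        omega
      obtain ⟨x, hxX, hxU⟩ := hex
      obtain ⟨e, heE, hgex⟩ := Finset.mem_image.1 hxX
      set f' := Function.update f (m + t) x with hf'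
      have hf'old : ∀ p, p < m + t → f' p = f p := by
        intro p hp
        rw [hf', Function.update_of_ne (by omega)]
      refine ⟨f', ?_, ?_⟩
      · intro p q hp hq hpq
        by_cases h1 : p = m + t
        · by_cases h2 : q = m + t
          · omega
          · exfalso
            rw [h1, hf'old q (by omega)] at hpq
            rw [hf', Function.update_self] at hpq
            exact hxU (by rw [hU]; exact Finset.mem_image.2 ⟨q, Finset.mem_range.2 (by omega), hpq.symm⟩)
        · by_cases h2 : q = m + t
          · exfalso
            rw [h2, hf'old p (by omega)] at hpq
            rw [hf', Function.update_self] at hpq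
            exact hxU (by rw [hU]; exact Finset.mem_image.2 ⟨p, Finset.mem_range.2 (by omega), hpq⟩)
          · rw [hf'old p (by omega), hf'old q (by omega)] at hpq
            exact hinj p q (by omega) (by omega) hpq
      · intro i hi
        by_cases hit : i ≤ t
        · have : (Finset.Ico i (i + m)).image f' = (Finset.Ico i (i + m)).image f := by
            apply Finset.image_congr
            intro p hp
            simp only [Finset.coe_Ico, Set.mem_Ico] at hp
            exact hf'old p (by omega)
          rw [this]
          exact hwin i hit
        · have hieq : i = t + 1 := by omega
          subst hieq
          have hsplit : Finset.Ico (t + 1) (t + 1 + m) = insert (t + m) (Finset.Ico (t + 1) (t + m)) := by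
            ext p
            simp only [Finset.mem_Ico, Finset.mem_insert]
            omega
          rw [hsplit, Finset.image_insert]
          have h1 : f' (t + m) = x := by
            rw [hf']
            have : t + m = m + t := by omega
            rw [this, Function.update_self]
          have h2 : (Finset.Ico (t + 1) (t + m)).image f' = σ := by
            rw [hσ]
            apply Finset.image_congr
            intro p hp
            simp only [Finset.coe_Ico, Set.mem_Ico] at hp
            exact hf'old p (by omega)
          rw [h1, h2]
          have : insert x σ = e := by
            rw [(hge e heE).1, ← hgex]
            rw [Finset.union_comm, ← Finset.insert_eq]
          rw [this]
          rw [hE, Finset.mem_filter] at heE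
          exact heE.1
  obtain ⟨f, hinj, hwin⟩ := key m le_rfl
  refine ⟨f, ?_, ?_⟩
  · rw [hVerts_pathE Nat.one_pos hm]
    intro p hp q hq h
    simp only [Finset.coe_range, Set.mem_Iio, Nat.mul_one] at hp hq
    exact hinj p q (by omega) (by omega) h
  · intro e he
    rw [mem_pathE] at he
    obtain ⟨i, hi, rfl⟩ := he
    rw [Nat.mul_one]
    exact hwin i (by omega)

lemma isCopy_mono {H G G' : Finset (Finset ℕ)} (h : IsCopy H G) (hsub : G ⊆ G') :
    IsCopy H G' := by
  obtain ⟨f, hinj, hcopy⟩ := h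
  exact ⟨f, hinj, fun e he => hsub (hcopy e he)⟩

noncomputable def codFam (m : ℕ) (H : Finset (Finset ℕ)) : Finset (Finset ℕ) :=
  ((hVerts H).powersetCard (m - 1)).filter fun σ => ∃ e ∈ H, σ ⊆ e

lemma extremal_aux (m : ℕ) (hm : 0 < m) : ∀ n : ℕ, ∀ H : Finset (Finset ℕ), H.card = n →
    IsUniform m H → ¬ IsCopy (pathE m 1 (m + 1)) H → H.card ≤ m * (codFam m H).card := by
  classical
  intro n
  induction n using Nat.strong_induction_on with
  | _ n ih =>
    intro H hcard hu hfree
    rcases H.eq_empty_or_nonempty with rfl | hne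
    · simp
    by_cases hC : ∃ σ ∈ codFam m H, (H.filter fun e => σ ⊆ e).card ≤ m
    · obtain ⟨σ, hσF, hσm⟩ := hC
      have hσ' := Finset.mem_filter.1 hσF
      obtain ⟨e0, he0, hσe0⟩ := hσ'.2
      set H' := H.filter (fun e => ¬ σ ⊆ e) with hH'
      have hpart : (H.filter fun e => σ ⊆ e).card + H'.card = H.card :=
        Finset.card_filter_add_card_filter_not _
      have hpos : 1 ≤ (H.filter fun e => σ ⊆ e).card :=
        Finset.card_pos.2 ⟨e0, Finset.mem_filter.2 ⟨he0, hσe0⟩⟩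
      have hH'sub : H' ⊆ H := Finset.filter_subset _ _
      have hlt : H'.card < n := by
        have := Finset.card_le_card hH'sub
        omega
      have ih' := ih H'.card hlt H' rfl (fun e he => hu e (hH'sub he))
        (fun hcop => hfree (isCopy_mono hcop hH'sub))
      have hsub : codFam m H' ⊆ (codFam m H).erase σ := by
        intro τ hτ
        rw [codFam, Finset.mem_filter, Finset.mem_powersetCard] at hτ
        obtain ⟨⟨hτv, hτc⟩, e, heH', hτe⟩ := hτ
        have heH := hH'sub heH'
        rw [Finset.mem_erase]
        constructor
        · rintro rfl
          rw [hH', Finset.mem_filter] at heH'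
          exact heH'.2 hτe
        · rw [codFam, Finset.mem_filter, Finset.mem_powersetCard]
          exact ⟨⟨hτv.trans (hVerts_mono hH'sub), hτc⟩, e, heH, hτe⟩
      have hcards : (codFam m H').card + 1 ≤ (codFam m H).card := by
        have h1 := Finset.card_le_card hsub
        rw [Finset.card_erase_of_mem hσF] at h1
        have h2 : 0 < (codFam m H).card := Finset.card_pos.2 ⟨σ, hσF⟩
        omega
      have hmul : m * ((codFam m H').card + 1) ≤ m * (codFam m H).card :=
        Nat.mul_le_mul_left m hcards
      rw [Nat.mul_add, Nat.mul_one] at hmul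
      omega
    · push_neg at hC
      exfalso
      apply hfree
      apply build_path hm H hu hne
      intro σ hσc hσe
      obtain ⟨e, heH, hσsub⟩ := hσe
      have hσF : σ ∈ codFam m H := by
        rw [codFam, Finset.mem_filter, Finset.mem_powersetCard]
        exact ⟨⟨fun x hx => mem_hVerts.2 ⟨e, heH, hσsub hx⟩, hσc⟩, e, heH, hσsub⟩
      have := hC σ hσF
      omega

lemma extremal {m N : ℕ} (hm : 0 < m) (H : Finset (Finset ℕ)) (hu : IsUniform m H)
    (hv : hVerts H ⊆ Finset.range N) (hfree : ¬ IsCopy (pathE m 1 (m + 1)) H) :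
    H.card ≤ m * N.choose (m - 1) := by
  have h1 := extremal_aux m hm H.card H rfl hu hfree
  have h2 : codFam m H ⊆ (Finset.range N).powersetCard (m - 1) := by
    refine (Finset.filter_subset _ _).trans ?_
    exact Finset.powersetCard_mono hv
  have h3 := Finset.card_le_card h2
  rw [Finset.card_powersetCard, Finset.card_range] at h3
  calc H.card ≤ m * (codFam m H).card := h1
  _ ≤ m * N.choose (m - 1) := Nat.mul_le_mul_left m h3

lemma arrows_K {m r : ℕ} (hm : 0 < m) (hr : 0 < r) :
    Arrows r ((Finset.range (m * (m + 1) * r)).powersetCard m) (pathE m 1 (m + 1)) := by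
  classical
  set N := m * (m + 1) * r with hN
  set K := (Finset.range N).powersetCard m with hK
  intro χ
  by_contra hcon
  push_neg at hcon
  have hbound : ∀ c : Fin r, (K.filter fun e => χ e = c).card ≤ m * N.choose (m - 1) := by
    intro c
    apply extremal hm
    · intro e he
      exact (Finset.mem_powersetCard.1 (Finset.mem_filter.1 he).1).2
    · intro x hx
      obtain ⟨e, he, hxe⟩ := mem_hVerts.1 hx
      exact (Finset.mem_powersetCard.1 (Finset.mem_filter.1 he).1).1 hxe
    · exact hcon c
  have hsum : K.card = ∑ c : Fin r, (K.filter fun e => χ e = c).card :=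
    Finset.card_eq_sum_card_fiberwise (fun e _ => Finset.mem_univ (χ e))
  have hKcard : K.card = N.choose m := by rw [hK, Finset.card_powersetCard, Finset.card_range]
  have hle : N.choose m ≤ r * (m * N.choose (m - 1)) := by
    rw [← hKcard, hsum]
    calc ∑ _c : Fin r, (K.filter fun e => χ e = _c).card
        ≤ ∑ _c : Fin r, m * N.choose (m - 1) := Finset.sum_le_sum fun c _ => hbound c
      _ = r * (m * N.choose (m - 1)) := by
          rw [Finset.sum_const, Finset.card_univ, Fintype.card_fin, smul_eq_mul]
  set C := N.choose (m - 1) with hC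
  have hid : N.choose m * m = C * (N - (m - 1)) := by
    have h := Nat.choose_succ_right_eq N (m - 1)
    have hm1 : m - 1 + 1 = m := by omega
    rw [hm1] at h
    rw [hC]
    exact h
  have hmN : m ≤ N := by
    rw [hN]
    calc m = m * 1 := (Nat.mul_one m).symm
    _ ≤ m * (m + 1) * r := by
        rw [Nat.mul_assoc]
        exact Nat.mul_le_mul_left m (Nat.one_le_iff_ne_zero.2 (Nat.mul_ne_zero (by omega) (by omega)))
  have hCpos : 0 < C := Nat.choose_pos (by omega)
  have e1 : N = m * m * r + m * r := by rw [hN]; ring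
  have e2 : m ≤ m * r := Nat.le_mul_of_pos_right m hr
  have h6 : N.choose m * m ≤ r * (m * C) * m := Nat.mul_le_mul_right m hle
  rw [hid] at h6
  have h7 : r * (m * C) * m = C * (m * m * r) := by ring
  have h8 : C * (m * m * r + 1) ≤ C * (N - (m - 1)) := Nat.mul_le_mul_left C (by omega)
  have h9 : C * (m * m * r + 1) = C * (m * m * r) + C := by ring
  linarith


theorem stmt14 (k r l m : ℕ) (hk : 2 ≤ k) (hr : 2 ≤ r) (hl1 : 1 ≤ l) (hl2 : l ≤ k - 1)
    (hm1 : 1 ≤ m) (hm2 : m * (k - l) < k) :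
    sizeRamsey k r (hPath k l (l + (m + 1) * (k - l))) ≤
        sizeRamsey (m * (k - l)) r
          (hPath (m * (k - l)) ((m - 1) * (k - l)) (2 * m * (k - l))) ∧
      sizeRamsey (m * (k - l)) r
          (hPath (m * (k - l)) ((m - 1) * (k - l)) (2 * m * (k - l))) ≤
        sizeRamsey m r (hPath m (m - 1) (2 * m)) ∧
      (sizeRamsey m r (hPath m (m - 1) (2 * m)) : ℝ) ≤ (Real.exp 1 * (m + 1) * r) ^ m := by
  classical
  have hd : 0 < k - l := by omega
  set d : ℕ := k - l with hdd
  have hm : 0 < m := hm1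
  -- path identifications
  have hP3 : hPath m (m - 1) (2 * m) = pathE m 1 (m + 1) := by
    rw [hPath, pathWithEdges_eq]
    have h1 : m - (m - 1) = 1 := by omega
    have h2 : 2 * m - (m - 1) = m + 1 := by omega
    rw [h1, h2, Nat.div_one]
  have hP2 : hPath (m * d) ((m - 1) * d) (2 * m * d) = pathE (m * d) d (m + 1) := by
    rw [hPath, pathWithEdges_eq]
    have h1 : m * d - (m - 1) * d = d := by
      rw [← Nat.sub_mul]
      have : m - (m - 1) = 1 := by omega
      rw [this, Nat.one_mul]
    have h2 : 2 * m * d - (m - 1) * d = (m + 1) * d := by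
      rw [← Nat.sub_mul]
      have : 2 * m - (m - 1) = m + 1 := by omega
      rw [this]
    rw [h1, h2, Nat.mul_div_cancel _ hd]
  have hP1 : hPath k l (l + (m + 1) * d) = pathE k d (m + 1) := by
    rw [hPath, pathWithEdges_eq, ← hdd]
    have h2 : l + (m + 1) * d - l = (m + 1) * d := by omega
    rw [h2, Nat.mul_div_cancel _ hd]
  rw [hP1, hP2, hP3]
  -- the complete host
  set N : ℕ := m * (m + 1) * r with hN
  set K : Finset (Finset ℕ) := (Finset.range N).powersetCard m with hKdef
  have hKuni : IsUniform m K := fun e he => (Finset.mem_powersetCard.1 he).2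
  have hKarr : Arrows r K (pathE m 1 (m + 1)) := arrows_K hm (by omega)
  have hKcard : K.card = N.choose m := by
    rw [hKdef, Finset.card_powersetCard, Finset.card_range]
  -- size Ramsey sets
  have hmem3 : N.choose m ∈ {n | ∃ G : Finset (Finset ℕ), IsUniform m G ∧
      Arrows r G (pathE m 1 (m + 1)) ∧ G.card = n} := ⟨K, hKuni, hKarr, hKcard⟩
  have hA3 : sizeRamsey m r (pathE m 1 (m + 1)) ≤ N.choose m := Nat.sInf_le hmem3
  -- inequality 2
  have hmem3' : sizeRamsey m r (pathE m 1 (m + 1)) ∈ {n | ∃ G : Finset (Finset ℕ),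
      IsUniform m G ∧ Arrows r G (pathE m 1 (m + 1)) ∧ G.card = n} :=
    Nat.sInf_mem ⟨_, hmem3⟩
  obtain ⟨G3, hu3, ha3, hc3⟩ := hmem3'
  obtain ⟨G2, hu2, ha2, hc2⟩ := blowup hd hm G3 hu3 ha3
  have hineq2 : sizeRamsey (m * d) r (pathE (m * d) d (m + 1)) ≤
      sizeRamsey m r (pathE m 1 (m + 1)) := by
    calc sizeRamsey (m * d) r (pathE (m * d) d (m + 1)) ≤ G2.card :=
        Nat.sInf_le ⟨G2, hu2, ha2, rfl⟩
    _ ≤ G3.card := hc2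
    _ = _ := hc3
  -- inequality 1
  have hmem2' : sizeRamsey (m * d) r (pathE (m * d) d (m + 1)) ∈ {n | ∃ G : Finset (Finset ℕ),
      IsUniform (m * d) G ∧ Arrows r G (pathE (m * d) d (m + 1)) ∧ G.card = n} :=
    Nat.sInf_mem ⟨G2.card, G2, hu2, ha2, rfl⟩
  obtain ⟨G2', hu2', ha2', hc2'⟩ := hmem2'
  obtain ⟨G1, hu1, ha1, hc1⟩ := addUniv (s := k - m * d) hd hm G2' hu2' ha2'
  have hkeq : m * d + (k - m * d) = k := Nat.add_sub_cancel' (Nat.le_of_lt hm2)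
  rw [hkeq] at hu1 ha1
  have hineq1 : sizeRamsey k r (pathE k d (m + 1)) ≤
      sizeRamsey (m * d) r (pathE (m * d) d (m + 1)) := by
    calc sizeRamsey k r (pathE k d (m + 1)) ≤ G1.card := Nat.sInf_le ⟨G1, hu1, ha1, rfl⟩
    _ ≤ G2'.card := hc1
    _ = _ := hc2'
  refine ⟨hineq1, hineq2, ?_⟩
  -- numeric bound
  have hfac : (0 : ℝ) < (Nat.factorial m : ℝ) := by
    exact_mod_cast Nat.factorial_pos m
  have hdesc : N.choose m * Nat.factorial m ≤ N ^ m := by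
    have h1 : Nat.factorial m * N.choose m = N.descFactorial m :=
      (Nat.descFactorial_eq_factorial_mul_choose N m).symm
    calc N.choose m * Nat.factorial m = Nat.factorial m * N.choose m := Nat.mul_comm _ _
    _ = N.descFactorial m := h1
    _ ≤ N ^ m := Nat.descFactorial_le_pow N m
  have hc1r : ((N.choose m : ℕ) : ℝ) ≤ (N : ℝ) ^ m / (Nat.factorial m : ℝ) := by
    rw [le_div_iff₀ hfac]
    exact_mod_cast hdesc
  have hexp : ((m : ℝ)) ^ m / (Nat.factorial m : ℝ) ≤ Real.exp m :=
    Real.pow_div_factorial_le_exp (x := (m : ℝ)) (Nat.cast_nonneg m) m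
  have hNr : (N : ℝ) = (m : ℝ) * ((m + 1) * r) := by
    rw [hN]; push_cast; ring
  have hfin : ((N.choose m : ℕ) : ℝ) ≤ (Real.exp 1 * (m + 1) * r) ^ m := by
    calc ((N.choose m : ℕ) : ℝ) ≤ (N : ℝ) ^ m / (Nat.factorial m : ℝ) := hc1r
    _ = ((m : ℝ) ^ m / (Nat.factorial m : ℝ)) * (((m : ℝ) + 1) * r) ^ m := by
        rw [hNr, mul_pow]; push_cast; ring
    _ ≤ Real.exp m * (((m : ℝ) + 1) * r) ^ m := by
        apply mul_le_mul_of_nonneg_right hexp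
        positivity
    _ = (Real.exp 1 * (m + 1) * r) ^ m := by
        have h : (Real.exp 1 * ((m : ℝ) + 1) * (r : ℝ)) ^ m
            = Real.exp m * (((m : ℝ) + 1) * (r : ℝ)) ^ m := by
          rw [mul_assoc, mul_pow, Real.exp_one_pow]
        rw [h]
  have hcast : (sizeRamsey m r (pathE m 1 (m + 1)) : ℝ) ≤ ((N.choose m : ℕ) : ℝ) :=
    Nat.cast_le.2 hA3
  exact hcast.trans hfin
end

section
/- Let r ≥ 2 and k ≥ 2. Let 𝓗 be a nonempty family of k-uniform hypergraphs and let F be a (k-1)-uniform hypergraph such that for every H ∈ 𝓗 and every vertex v of H, the link graph of v in H contains a copy of F. Then R̂_r(𝓗) ≥ (1/k)·R̂_r(F)·R_r(𝓗). -/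
open Finset

/-- `G →_r 𝓗` for a family `𝓗`: every `r`-coloring of the edges of `G` yields a
monochromatic copy of some member of `𝓗`. -/
def ArrowsFam (r : ℕ) (G : Finset (Finset ℕ)) (ℋ : Set (Finset (Finset ℕ))) : Prop :=
  ∀ χ : Finset ℕ → Fin r, ∃ c : Fin r, ∃ H ∈ ℋ, IsCopy H (G.filter fun e => χ e = c)

/-- The `r`-color size-Ramsey number of a family `𝓗`. -/
noncomputable def sizeRamseyFam (k r : ℕ) (ℋ : Set (Finset (Finset ℕ))) : ℕ :=
  sInf {m | ∃ G : Finset (Finset ℕ), IsUniform k G ∧ ArrowsFam r G ℋ ∧ G.card = m}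

/-- The `r`-color Ramsey number of a family `𝓗`. -/
noncomputable def vertexRamseyFam (k r : ℕ) (ℋ : Set (Finset (Finset ℕ))) : ℕ :=
  sInf {m | ∃ G : Finset (Finset ℕ), IsUniform k G ∧ ArrowsFam r G ℋ ∧ (hVerts G).card = m}

/-- The link graph of a vertex `v` in a hypergraph `H`. -/
def linkGraph (H : Finset (Finset ℕ)) (v : ℕ) : Finset (Finset ℕ) :=
  (H.filter fun e => v ∈ e).image fun e => e.erase v

lemma key (k r : ℕ) (hr : 1 ≤ r)
    (ℋ : Set (Finset (Finset ℕ)))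
    (F : Finset (Finset ℕ))
    (hlink : ∀ H ∈ ℋ, ∀ v ∈ hVerts H, IsCopy F (linkGraph H v))
    (G : Finset (Finset ℕ)) (hG : IsUniform k G) (hGa : ArrowsFam r G ℋ) :
    sizeRamsey (k-1) r F * vertexRamseyFam k r ℋ ≤ k * G.card := by
  classical
  set U : Finset ℕ := (hVerts G).filter (fun v => ¬ Arrows r (linkGraph G v) F) with hU
  have hbad : ∀ v : ℕ, ∃ ξ : Finset ℕ → Fin r,
      v ∈ U → ∀ c, ¬ IsCopy F ((linkGraph G v).filter fun a => ξ a = c) := by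
    intro v
    by_cases hv : v ∈ U
    · have h2 : ¬ Arrows r (linkGraph G v) F := (mem_filter.mp hv).2
      unfold Arrows at h2
      push_neg at h2
      obtain ⟨ξ, hξ⟩ := h2
      exact ⟨ξ, fun _ => hξ⟩
    · exact ⟨fun _ => ⟨0, by omega⟩, fun h => absurd h hv⟩
  choose ξ hξ using hbad
  set G' : Finset (Finset ℕ) := G.filter (fun e => e ∩ U = ∅) with hG'def
  have hG'sub : G' ⊆ G := filter_subset _ _
  have hG'a : ArrowsFam r G' ℋ := by
    intro χ
    set χ' : Finset ℕ → Fin r := fun e =>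
      if h : (e ∩ U).Nonempty then ξ ((e ∩ U).min' h) (e.erase ((e ∩ U).min' h)) else χ e with hχ'
    obtain ⟨c, H, hH, f, hf, hcopy⟩ := hGa χ'
    have hcopy' : ∀ e ∈ H, e.image f ∈ G ∧ χ' (e.image f) = c := by
      intro e he
      exact mem_filter.mp (hcopy e he)
    by_cases hS : (H.biUnion fun e => (e.image f) ∩ U).Nonempty
    · exfalso
      set S := H.biUnion fun e => (e.image f) ∩ U with hSdef
      set u := S.min' hS with hu
      have huS : u ∈ S := S.min'_mem hS
      obtain ⟨e₀, he₀, hue₀⟩ := mem_biUnion.mp huS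
      have huU : u ∈ U := (mem_inter.mp hue₀).2
      obtain ⟨v, hv, hfv⟩ := mem_image.mp (mem_inter.mp hue₀).1
      have hvH : v ∈ hVerts H := mem_biUnion.mpr ⟨e₀, he₀, hv⟩
      have hmin : ∀ e ∈ H, u ∈ e.image f → ∀ h : ((e.image f) ∩ U).Nonempty,
          ((e.image f) ∩ U).min' h = u := by
        intro e he hue h
        refine le_antisymm (min'_le _ _ (mem_inter.mpr ⟨hue, huU⟩)) ?_
        exact S.min'_le _ (mem_biUnion.mpr ⟨e, he, min'_mem _ h⟩)
      obtain ⟨g, hg, hgcopy⟩ := hlink H hH v hvH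
      -- g maps hVerts F into hVerts H
      have hgrange : ∀ x ∈ hVerts F, g x ∈ hVerts H := by
        intro x hx
        obtain ⟨a, ha, hxa⟩ := mem_biUnion.mp hx
        have hga := hgcopy a ha
        simp only [linkGraph, mem_image, mem_filter] at hga
        obtain ⟨e', ⟨he', hve'⟩, heq⟩ := hga
        have : g x ∈ a.image g := mem_image_of_mem g hxa
        rw [← heq] at this
        exact mem_biUnion.mpr ⟨e', he', (erase_subset v e') this⟩
      apply hξ u huU c
      refine ⟨f ∘ g, ?_, ?_⟩
      · intro x hx y hy hxy
        exact hg hx hy (hf (hgrange x hx) (hgrange y hy) hxy)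
      · intro a ha
        have hga := hgcopy a ha
        simp only [linkGraph, mem_image, mem_filter] at hga
        obtain ⟨e', ⟨he', hve'⟩, heq⟩ := hga
        have he'G : e'.image f ∈ G := (hcopy' e' he').1
        have he'c : χ' (e'.image f) = c := (hcopy' e' he').2
        have he'sub : (e' : Set ℕ) ⊆ (hVerts H : Set ℕ) := by
          intro x hx
          exact_mod_cast mem_biUnion.mpr ⟨e', he', by exact_mod_cast hx⟩
        have himg : a.image (f ∘ g) = (e'.image f).erase u := by
          rw [← hfv, ← image_image, ← heq]
          ext x
          simp only [mem_image, mem_erase]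
          constructor
          · rintro ⟨w, ⟨hwv, hwe'⟩, rfl⟩
            refine ⟨fun hcon => hwv (hf (he'sub hwe') (he'sub hve') hcon), w, hwe', rfl⟩
          · rintro ⟨hxfv, w, hwe', rfl⟩
            exact ⟨w, ⟨fun hcon => hxfv (by rw [hcon]), hwe'⟩, rfl⟩
        rw [himg]
        have hue' : u ∈ e'.image f := by rw [← hfv]; exact mem_image_of_mem f hve'
        have hne : ((e'.image f) ∩ U).Nonempty := ⟨u, mem_inter.mpr ⟨hue', huU⟩⟩
        have hminu := hmin e' he' hue' hne
        have hχu : ξ u ((e'.image f).erase u) = c := by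
          rw [← he'c]
          simp only [hχ', dif_pos hne, hminu]
        refine mem_filter.mpr ⟨?_, hχu⟩
        simp only [linkGraph, mem_image, mem_filter]
        exact ⟨e'.image f, ⟨he'G, hue'⟩, rfl⟩
    · -- all copy edges avoid U
      refine ⟨c, H, hH, f, hf, ?_⟩
      intro e he
      have hempty : (e.image f) ∩ U = ∅ := by
        by_contra hcon
        exact hS ⟨((e.image f) ∩ U).min' (nonempty_iff_ne_empty.mpr hcon),
          mem_biUnion.mpr ⟨e, he, min'_mem _ _⟩⟩
      have h1 := hcopy' e he
      have hχeq : χ' (e.image f) = χ (e.image f) := by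
        simp only [hχ']
        rw [dif_neg]
        rw [hempty]
        simp
      refine mem_filter.mpr ⟨mem_filter.mpr ⟨h1.1, hempty⟩, ?_⟩
      rw [← hχeq]; exact h1.2
  -- counting
  have hA : ∀ v ∈ hVerts G, v ∉ U → sizeRamsey (k-1) r F ≤ (G.filter fun e => v ∈ e).card := by
    intro v hv hvU
    have harr : Arrows r (linkGraph G v) F := by
      by_contra h; exact hvU (mem_filter.mpr ⟨hv, h⟩)
    have hu2 : IsUniform (k-1) (linkGraph G v) := by
      intro a ha
      simp only [linkGraph, mem_image, mem_filter] at ha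
      obtain ⟨e, ⟨heG, hve⟩, rfl⟩ := ha
      rw [card_erase_of_mem hve, hG e heG]
    calc sizeRamsey (k-1) r F ≤ (linkGraph G v).card := Nat.sInf_le ⟨_, hu2, harr, rfl⟩
      _ ≤ _ := card_image_le
  have hB : vertexRamseyFam k r ℋ ≤ ((hVerts G).filter (· ∉ U)).card := by
    have hG'unif : IsUniform k G' := fun e he => hG e (hG'sub he)
    have h1 : vertexRamseyFam k r ℋ ≤ (hVerts G').card := Nat.sInf_le ⟨G', hG'unif, hG'a, rfl⟩
    refine h1.trans (card_le_card ?_)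
    intro x hx
    obtain ⟨e, he, hxe⟩ := mem_biUnion.mp hx
    have heG := hG'sub he
    have heU : e ∩ U = ∅ := (mem_filter.mp he).2
    refine mem_filter.mpr ⟨mem_biUnion.mpr ⟨e, heG, hxe⟩, ?_⟩
    intro hxU
    have : x ∈ e ∩ U := mem_inter.mpr ⟨hxe, hxU⟩
    rw [heU] at this
    exact absurd this (notMem_empty x)
  have hsub : ∀ e ∈ G, e ⊆ hVerts G := fun e he x hx => mem_biUnion.mpr ⟨e, he, hx⟩
  have hsum : ∑ v ∈ hVerts G, (G.filter fun e => v ∈ e).card = k * G.card := by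
    calc ∑ v ∈ hVerts G, (G.filter fun e => v ∈ e).card
        = ∑ v ∈ hVerts G, ∑ e ∈ G, if v ∈ e then 1 else 0 := by
          refine sum_congr rfl fun v _ => ?_
          rw [card_filter]
      _ = ∑ e ∈ G, ∑ v ∈ hVerts G, if v ∈ e then 1 else 0 := sum_comm
      _ = ∑ e ∈ G, e.card := by
          refine sum_congr rfl fun e he => ?_
          rw [← sum_filter]
          have : (hVerts G).filter (· ∈ e) = e := by
            ext x
            simp only [mem_filter]
            exact ⟨fun h => h.2, fun h => ⟨hsub e he h, h⟩⟩
          rw [this, sum_const, smul_eq_mul, mul_one]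
      _ = k * G.card := by
          rw [sum_congr rfl (fun e he => hG e he), sum_const, smul_eq_mul, mul_comm]
  calc sizeRamsey (k-1) r F * vertexRamseyFam k r ℋ
      ≤ sizeRamsey (k-1) r F * ((hVerts G).filter (· ∉ U)).card :=
        Nat.mul_le_mul_left _ hB
    _ = ((hVerts G).filter (· ∉ U)).card • sizeRamsey (k-1) r F := by
        rw [smul_eq_mul, mul_comm]
    _ ≤ ∑ v ∈ (hVerts G).filter (· ∉ U), (G.filter fun e => v ∈ e).card := by
        refine card_nsmul_le_sum _ _ _ fun v hv => ?_
        obtain ⟨h1, h2⟩ := mem_filter.mp hv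
        exact hA v h1 h2
    _ ≤ ∑ v ∈ hVerts G, (G.filter fun e => v ∈ e).card := by
        exact sum_le_sum_of_subset (filter_subset _ _)
    _ = k * G.card := hsum

theorem stmt17 (k r : ℕ) (hk : 2 ≤ k) (hr : 2 ≤ r)
    (ℋ : Set (Finset (Finset ℕ))) (hne : ℋ.Nonempty)
    (hunif : ∀ H ∈ ℋ, IsUniform k H)
    (F : Finset (Finset ℕ)) (hF : IsUniform (k - 1) F)
    (hlink : ∀ H ∈ ℋ, ∀ v ∈ hVerts H, IsCopy F (linkGraph H v)) :
    (sizeRamseyFam k r ℋ : ℝ) ≥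
      (1 / k) * sizeRamsey (k - 1) r F * vertexRamseyFam k r ℋ := by
  classical
  by_cases hS : {m | ∃ G : Finset (Finset ℕ), IsUniform k G ∧ ArrowsFam r G ℋ ∧ G.card = m}.Nonempty
  · obtain ⟨G, hGu, hGa, hGc⟩ :
        ∃ G : Finset (Finset ℕ), IsUniform k G ∧ ArrowsFam r G ℋ ∧
          G.card = sizeRamseyFam k r ℋ := Nat.sInf_mem hS
    have hkey := key k r (by omega) ℋ F hlink G hGu hGa
    rw [hGc] at hkey
    have hk0 : (0:ℝ) < (k:ℝ) := by positivity
    have hcast : ((sizeRamsey (k-1) r F : ℝ)) * (vertexRamseyFam k r ℋ : ℝ)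
        ≤ (k : ℝ) * (sizeRamseyFam k r ℋ : ℝ) := by exact_mod_cast hkey
    rw [ge_iff_le]
    rw [div_mul_eq_mul_div, div_mul_eq_mul_div, one_mul, div_le_iff₀ hk0]
    linarith [hcast]
  · have h2 : vertexRamseyFam k r ℋ = 0 := by
      unfold vertexRamseyFam
      rw [Nat.sInf_eq_zero]
      right
      rw [Set.eq_empty_iff_forall_notMem]
      rintro m ⟨G, h1, hGa, h3⟩
      exact hS ⟨G.card, G, h1, hGa, rfl⟩
    rw [h2]
    simp
end
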